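/- arXiv:2012.00736 — 3 statements merged into one kernel-verified Lean document; each statement's English description precedes it below -/
import Mathlib

section
/- (No-Programming Theorem, part 1: orthogonality of programs.) Let d, d_P, N be positive integers. Let G be a unitary operator on ℂ^d ⊗ ℂ^{d_P} (realized as ℂ^(d×d_P)), let U_1, …, U_N be unitary d×d complex matrices that are pairwise distinct up to a global phase (for i ≠ j there is no c ∈ ℂ with U_i = c·U_j), and suppose there exist unit vectors P_1, …, P_N ∈ ℂ^{d_P} and vectors P_1', …, P_N' ∈ ℂ^{d_P} such that for every i and every ψ ∈ ℂ^d one has G(ψ ⊗ P_i) = (U_i ψ) ⊗ P_i'. Then the program states are mutually orthogonal: ⟨P_i, P_j⟩ = 0 for all i ≠ j. -/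
/-- The tensor product of a vector `ψ : ℂ^d` with a vector `φ : ℂ^m`,
realized as a vector indexed by `Fin d × Fin m` with entries `ψ a * φ b`. -/
noncomputable def tensorVec {d m : ℕ} (ψ : Fin d → ℂ) (φ : Fin m → ℂ) :
    Fin d × Fin m → ℂ := fun p => ψ p.1 * φ p.2

open Matrix

/-- Inner product of tensor products factors. -/
lemma tensor_dot {d m : ℕ} (v w : Fin d → ℂ) (p q : Fin m → ℂ) :
    star (tensorVec v p) ⬝ᵥ tensorVec w q = (star v ⬝ᵥ w) * (star p ⬝ᵥ q) := by
  simp only [tensorVec, dotProduct, Pi.star_apply, star_mul', Finset.sum_mul_sum,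
    Fintype.sum_prod_type]
  refine Finset.sum_congr rfl fun a _ => Finset.sum_congr rfl fun b _ => ?_
  ring

/-- A unitary matrix preserves the (conjugate-linear) dot product. -/
lemma unitary_dot {n : Type*} [Fintype n] [DecidableEq n]
    (G : Matrix n n ℂ) (hG : G ∈ Matrix.unitaryGroup n ℂ) (v w : n → ℂ) :
    star (G.mulVec v) ⬝ᵥ G.mulVec w = star v ⬝ᵥ w := by
  rw [Matrix.star_mulVec, Matrix.dotProduct_mulVec, Matrix.vecMul_vecMul,
    ← Matrix.star_eq_conjTranspose, Unitary.star_mul_self_of_mem hG, Matrix.vecMul_one]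

/-- No-Programming Theorem, part 1: the program states of distinct unitaries
are mutually orthogonal. -/
theorem no_programming_orthogonality
    (d dP N : ℕ) (hd : 0 < d) (hdP : 0 < dP) (hN : 0 < N)
    (G : Matrix (Fin d × Fin dP) (Fin d × Fin dP) ℂ)
    (hG : G ∈ Matrix.unitaryGroup (Fin d × Fin dP) ℂ)
    (U : Fin N → Matrix (Fin d) (Fin d) ℂ)
    (hU : ∀ i, U i ∈ Matrix.unitaryGroup (Fin d) ℂ)
    (hdistinct : ∀ i j, i ≠ j → ∀ c : ℂ, U i ≠ c • U j)
    (P P' : Fin N → (Fin dP → ℂ))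
    (hPunit : ∀ i, ∑ a, star (P i a) * P i a = 1)
    (hproc : ∀ i (ψ : Fin d → ℂ),
      G.mulVec (tensorVec ψ (P i)) = tensorVec ((U i).mulVec ψ) (P' i)) :
    ∀ i j, i ≠ j → ∑ a, star (P i a) * P j a = 0 := by
  intro i j hij
  set s : ℂ := star (P i) ⬝ᵥ P j with hs
  set c : ℂ := star (P' i) ⬝ᵥ P' j with hc
  have hgoal : (∑ a, star (P i a) * P j a) = s := rfl
  rw [hgoal]
  -- Unitarity of G plus the processor equation gives
  -- ⟨ψ,φ⟩⟨P_i,P_j⟩ = ⟨U_iψ,U_jφ⟩⟨P_i',P_j'⟩ for all ψ, φ.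
  have main : ∀ ψ φ : Fin d → ℂ,
      (star ψ ⬝ᵥ φ) * s = (star ((U i).mulVec ψ) ⬝ᵥ ((U j).mulVec φ)) * c := by
    intro ψ φ
    have h1 := unitary_dot G hG (tensorVec ψ (P i)) (tensorVec φ (P j))
    rw [hproc i ψ, hproc j φ, tensor_dot, tensor_dot] at h1
    exact h1.symm
  -- Evaluate on standard basis vectors: s • 1 = c • (U_iᴴ U_j) entrywise.
  have key : ∀ a b : Fin d,
      (if a = b then (1:ℂ) else 0) * s = ((U i)ᴴ * U j) a b * c := by
    intro a b
    have h := main (Pi.single a 1) (Pi.single b 1)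
    have e1 : star (Pi.single a (1:ℂ)) ⬝ᵥ Pi.single b 1 = if a = b then (1:ℂ) else 0 := by
      simp [dotProduct, Pi.single_apply, apply_ite, Finset.sum_ite_eq]
      split <;> simp_all [eq_comm]
    have e2 : star ((U i).mulVec (Pi.single a 1)) ⬝ᵥ ((U j).mulVec (Pi.single b 1))
        = ((U i)ᴴ * U j) a b := by
      simp [dotProduct, Matrix.mulVec_single, Matrix.mul_apply, Matrix.conjTranspose_apply]
    rw [e1, e2] at h
    exact h
  by_cases hc0 : c = 0
  · -- If ⟨P_i',P_j'⟩ = 0, take a = b on the diagonal to get s = 0.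
    have h := key ⟨0, hd⟩ ⟨0, hd⟩
    simpa [hc0] using h
  · -- Otherwise U_iᴴ U_j is a scalar matrix, forcing U_j = (s/c) • U_i, a contradiction.
    exfalso
    have hM : (U i)ᴴ * U j = (s / c) • (1 : Matrix (Fin d) (Fin d) ℂ) := by
      ext a b
      have h := key a b
      have : ((U i)ᴴ * U j) a b = (if a = b then (1:ℂ) else 0) * s / c := by
        field_simp at h ⊢
        linear_combination h.symm
      rw [this]
      simp [Matrix.smul_apply, Matrix.one_apply]
      split <;> field_simp <;> simp
    have hUj : U j = (s / c) • U i := by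
      have h2 : U i * ((U i)ᴴ * U j) = U i * ((s / c) • (1 : Matrix (Fin d) (Fin d) ℂ)) := by
        rw [hM]
      rw [← Matrix.mul_assoc, ← Matrix.star_eq_conjTranspose,
        (Matrix.mem_unitaryGroup_iff.mp (hU i)), Matrix.one_mul, Matrix.mul_smul,
        Matrix.mul_one] at h2
      exact h2
    exact hdistinct j i hij.symm (s / c) hUj
end

section
/- (Low-energy sandwich inequality for energy-limited unitaries.) Let H be a positive semidefinite d×d complex matrix, let E > 0, 0 < δ ≤ 1, and α, β ≥ 0. Let U be a unitary d×d matrix with Uᴴ H U ≼ α·H + β·1 (the unitary channel ρ ↦ U ρ Uᴴ is (α,β)-energy-limited). Let P and Q be d×d orthogonal projections such that P H P ≼ (E/δ)·P and (E/δ²)·(1 − Q) ≼ H. Then (1 − δ·(α + β/E))·P ≼ P Uᴴ Q U P ≼ P. -/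
open scoped ComplexOrder Matrix

lemma psd_smul {d : ℕ} {M : Matrix (Fin d) (Fin d) ℂ} (hM : M.PosSemidef)
    {c : ℝ} (hc : 0 ≤ c) : (((c : ℂ)) • M).PosSemidef := by
  constructor
  · unfold Matrix.IsHermitian
    rw [Matrix.conjTranspose_smul, hM.1]
    simp
  · intro x
    exact (hM.smul (show (0 : ℂ) ≤ c by exact_mod_cast hc)).2 x

/-- Low-energy sandwich inequality for `(α,β)`-energy-limited unitaries:
if every unit vector in the range of `P` has energy at most `E/δ`, `Q` is a
spectral projection onto energies at most `E/δ²`, and `Uᴴ H U ≼ α·H + β·1`,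
then `(1 − δ·(α + β/E))·P ≼ P Uᴴ Q U P ≼ P`. -/
theorem low_energy_sandwich
    (d : ℕ) (H U P Q : Matrix (Fin d) (Fin d) ℂ)
    (hH : H.PosSemidef)
    (E δ α β : ℝ) (hE : 0 < E) (hδ0 : 0 < δ) (hδ1 : δ ≤ 1)
    (hα : 0 ≤ α) (hβ : 0 ≤ β)
    (hU : U ∈ Matrix.unitaryGroup (Fin d) ℂ)
    (hUE : ((((α : ℂ) • H + (β : ℂ) • 1) - Uᴴ * H * U)).PosSemidef)
    (hP : P.IsHermitian) (hP2 : P * P = P)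
    (hQ : Q.IsHermitian) (hQ2 : Q * Q = Q)
    (hPH : (((E / δ : ℝ) : ℂ) • P - P * H * P).PosSemidef)
    (hQH : (H - ((E / δ ^ 2 : ℝ) : ℂ) • (1 - Q)).PosSemidef) :
    (P * Uᴴ * Q * U * P - ((1 - δ * (α + β / E) : ℝ) : ℂ) • P).PosSemidef ∧
      (P - P * Uᴴ * Q * U * P).PosSemidef := by
  have hUu : Uᴴ * U = 1 := by
    simpa [Matrix.star_eq_conjTranspose] using hU.1
  have hcancel : ∀ X : Matrix (Fin d) (Fin d) ℂ, Uᴴ * (U * X) = X := by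
    intro X; rw [← mul_assoc, hUu, one_mul]
  have hPpsd : P.PosSemidef := by
    have := Matrix.posSemidef_conjTranspose_mul_self P
    rwa [hP.eq, hP2] at this
  have h1Q : ((1 : Matrix (Fin d) (Fin d) ℂ) - Q).PosSemidef := by
    have herm : ((1 : Matrix (Fin d) (Fin d) ℂ) - Q)ᴴ = 1 - Q := by
      simp [Matrix.conjTranspose_sub, hQ.eq]
    have sq : ((1 : Matrix (Fin d) (Fin d) ℂ) - Q) * (1 - Q) = 1 - Q := by
      simp [mul_sub, sub_mul, hQ2]
    have := Matrix.posSemidef_conjTranspose_mul_self ((1 : Matrix (Fin d) (Fin d) ℂ) - Q)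
    rwa [herm, sq] at this
  constructor
  · -- lower bound
    have s1 : (((δ ^ 2 / E : ℝ) : ℂ) •
        ((U * P)ᴴ * (H - ((E / δ ^ 2 : ℝ) : ℂ) • (1 - Q)) * (U * P))).PosSemidef :=
      psd_smul (hQH.conjTranspose_mul_mul_same (U * P)) (by positivity)
    have s2 : (((δ ^ 2 / E : ℝ) : ℂ) •
        (Pᴴ * ((((α : ℂ) • H + (β : ℂ) • 1) - Uᴴ * H * U)) * P)).PosSemidef :=
      psd_smul (hUE.conjTranspose_mul_mul_same P) (by positivity)
    have s3 : (((δ ^ 2 * α / E : ℝ) : ℂ) •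
        (((E / δ : ℝ) : ℂ) • P - P * H * P)).PosSemidef :=
      psd_smul hPH (by positivity)
    have s4 : (((δ * (β / E) * (1 - δ) : ℝ) : ℂ) • P).PosSemidef :=
      psd_smul hPpsd (by
        have : 0 ≤ 1 - δ := by linarith
        positivity)
    have heq : P * Uᴴ * Q * U * P - ((1 - δ * (α + β / E) : ℝ) : ℂ) • P =
        (((δ ^ 2 / E : ℝ) : ℂ) •
          ((U * P)ᴴ * (H - ((E / δ ^ 2 : ℝ) : ℂ) • (1 - Q)) * (U * P)) +
        ((δ ^ 2 / E : ℝ) : ℂ) •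
          (Pᴴ * ((((α : ℂ) • H + (β : ℂ) • 1) - Uᴴ * H * U)) * P)) +
        (((δ ^ 2 * α / E : ℝ) : ℂ) • (((E / δ : ℝ) : ℂ) • P - P * H * P) +
        ((δ * (β / E) * (1 - δ) : ℝ) : ℂ) • P) := by
      have hE' : (E : ℂ) ≠ 0 := by exact_mod_cast hE.ne'
      have hδ' : (δ : ℂ) ≠ 0 := by exact_mod_cast hδ0.ne'
      push_cast
      simp only [Matrix.conjTranspose_mul, hP.eq, Matrix.mul_sub, Matrix.sub_mul,
        Matrix.mul_add, Matrix.add_mul, Matrix.mul_smul, Matrix.smul_mul,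
        Matrix.mul_one, Matrix.one_mul, mul_assoc, hcancel, hP2, smul_sub,
        smul_add, smul_smul]
      match_scalars <;> field_simp <;> ring
    rw [heq]
    exact (s1.add s2).add (s3.add s4)
  · -- upper bound
    have s0 : ((U * P)ᴴ * (1 - Q) * (U * P)).PosSemidef :=
      h1Q.conjTranspose_mul_mul_same (U * P)
    have heq : P - P * Uᴴ * Q * U * P = (U * P)ᴴ * (1 - Q) * (U * P) := by
      simp only [Matrix.conjTranspose_mul, hP.eq, Matrix.mul_sub, Matrix.sub_mul,
        Matrix.mul_one, mul_assoc, hcancel, hP2]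
    rw [heq]; exact s0
end

section
/- (Square-root perturbation under a projection sandwich.) Let P be a d×d orthogonal projection, A a positive semidefinite d×d complex matrix, and c ∈ [0,1] such that (1 − c)·P ≼ A ≼ P. Then 0 ≼ P − √A ≼ c·P; in particular the operator norm of P − √A is at most c. -/
open scoped ComplexOrder Matrix

/-- The positive semidefinite square root of a positive semidefinite matrix
(the definition `Matrix.PosSemidef.sqrt` of the older Mathlib, removed since). -/
noncomputable def Matrix.PosSemidef.sqrt {n : Type*} [Fintype n] [DecidableEq n] {𝕜 : Type*}
    [RCLike 𝕜] {A : Matrix n n 𝕜} (hA : A.PosSemidef) : Matrix n n 𝕜 :=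
  hA.1.eigenvectorUnitary.1 * Matrix.diagonal ((↑) ∘ (√·) ∘ hA.1.eigenvalues) *
    (star hA.1.eigenvectorUnitary : Matrix n n 𝕜)

open scoped MatrixOrder in
lemma Matrix.PosSemidef.sqrt_eq_cfcSqrt {d : ℕ} {A : Matrix (Fin d) (Fin d) ℂ} (hA : A.PosSemidef) :
    hA.sqrt = CFC.sqrt A := by
  rw [CFC.sqrt_eq_cfc, cfc_nnreal_eq_real _ A, hA.1.cfc_eq]
  simp only [Matrix.IsHermitian.cfc, Matrix.PosSemidef.sqrt, Unitary.conjStarAlgAut_apply]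
  congr 3
  funext i
  simp only [Function.comp_apply, Real.coe_sqrt, Real.coe_toNNReal _ (hA.eigenvalues_nonneg i)]

open scoped MatrixOrder in
lemma Matrix.PosSemidef.posSemidef_sqrt {d : ℕ} {A : Matrix (Fin d) (Fin d) ℂ}
    (hA : A.PosSemidef) : hA.sqrt.PosSemidef := by
  rw [hA.sqrt_eq_cfcSqrt]
  exact Matrix.nonneg_iff_posSemidef.mp (CFC.sqrt_nonneg A)

open scoped MatrixOrder in
lemma Matrix.PosSemidef.sq_sqrt {d : ℕ} {A : Matrix (Fin d) (Fin d) ℂ}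
    (hA : A.PosSemidef) : hA.sqrt ^ 2 = A := by
  rw [hA.sqrt_eq_cfcSqrt]
  exact CFC.sq_sqrt A hA.nonneg

open scoped MatrixOrder in
lemma Matrix.PosSemidef.eq_sqrt_of_sq_eq {d : ℕ} {A B : Matrix (Fin d) (Fin d) ℂ}
    (hA : A.PosSemidef) (hB : B.PosSemidef) (h : A ^ 2 = B) : A = hB.sqrt := by
  rw [hB.sqrt_eq_cfcSqrt, eq_comm, CFC.sqrt_eq_iff B A hB.nonneg hA.nonneg, ← h, sq]

open Matrix in
/-- Scaling a PSD matrix by a nonnegative real keeps it PSD. -/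
lemma psd_real_smul {d : ℕ} {P : Matrix (Fin d) (Fin d) ℂ} (hP : P.PosSemidef)
    {r : ℝ} (hr : 0 ≤ r) : ((r : ℂ) • P).PosSemidef := by
  refine Matrix.PosSemidef.of_dotProduct_mulVec_nonneg ?_ (fun x => ?_)
  · unfold Matrix.IsHermitian
    rw [conjTranspose_smul, hP.1]
    simp
  · rw [smul_mulVec, dotProduct_smul, smul_eq_mul]
    exact mul_nonneg (by exact_mod_cast hr) (hP.dotProduct_mulVec_nonneg x)

open Matrix in
/-- Operator monotonicity of the matrix square root. -/
lemma sqrt_mono {d : ℕ} {A B : Matrix (Fin d) (Fin d) ℂ}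
    (hA : A.PosSemidef) (hB : B.PosSemidef) (hAB : (B - A).PosSemidef) :
    (hB.sqrt - hA.sqrt).PosSemidef := by
  set S := hA.sqrt with hSdef
  set T := hB.sqrt with hTdef
  have hSp : S.PosSemidef := hA.posSemidef_sqrt
  have hTp : T.PosSemidef := hB.posSemidef_sqrt
  have hM : (T - S).IsHermitian := hTp.1.sub hSp.1
  apply hM.posSemidef_iff_eigenvalues_nonneg.mpr
  intro i
  by_contra hneg
  push_neg at hneg
  set t : ℝ := hM.eigenvalues i with htdef
  set v : Fin d → ℂ := ⇑(hM.eigenvectorBasis i) with hvdef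
  have hv : (T - S) *ᵥ v = (t : ℝ) • v := hM.mulVec_eigenvectorBasis i
  have hv0 : v ≠ 0 := by
    have := (hM.eigenvectorBasis).toBasis.ne_zero i
    exact fun h => this (by ext j; simpa using congrFun h j)
  have hsq : T ^ 2 - S ^ 2 = B - A := by
    rw [hB.sq_sqrt, hA.sq_sqrt]
  have h_sum : star v ⬝ᵥ (B - A) *ᵥ v
      = (t : ℂ) * (star v ⬝ᵥ T *ᵥ v + star v ⬝ᵥ S *ᵥ v) := calc
    star v ⬝ᵥ (B - A) *ᵥ v = star v ⬝ᵥ (T ^ 2 - S ^ 2) *ᵥ v := by rw [hsq]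
    _ = star v ⬝ᵥ T *ᵥ (T - S) *ᵥ v + star v ⬝ᵥ (T - S) *ᵥ S *ᵥ v := by
      rw [mulVec_mulVec, mulVec_mulVec, ← dotProduct_add, ← add_mulVec, mul_sub, sub_mul,
        add_sub, sub_add_cancel, pow_two, pow_two]
    _ = (t : ℂ) * (star v ⬝ᵥ T *ᵥ v) + (star v) ᵥ* (T - S)ᴴ ⬝ᵥ S *ᵥ v := by
      rw [hv, mulVec_smul, dotProduct_smul, RCLike.real_smul_eq_coe_mul,
        dotProduct_mulVec _ (T - S), hM]
      rfl
    _ = (t : ℂ) * (star v ⬝ᵥ T *ᵥ v + star v ⬝ᵥ S *ᵥ v) := by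
      have hstar : star v ᵥ* (T - S)ᴴ = (t : ℝ) • star v := by
        rw [← star_mulVec, hv]
        simp [star_smul]
      rw [hstar, smul_dotProduct, RCLike.real_smul_eq_coe_mul, mul_add]
      rfl
  have hge : 0 ≤ star v ⬝ᵥ (B - A) *ᵥ v := hAB.dotProduct_mulVec_nonneg v
  -- the sum of the two quadratic forms must vanish
  have hqT : 0 ≤ star v ⬝ᵥ T *ᵥ v := hTp.dotProduct_mulVec_nonneg v
  have hqS : 0 ≤ star v ⬝ᵥ S *ᵥ v := hSp.dotProduct_mulVec_nonneg v
  have hq : star v ⬝ᵥ T *ᵥ v + star v ⬝ᵥ S *ᵥ v = 0 := by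
    have hsum0 : 0 ≤ star v ⬝ᵥ T *ᵥ v + star v ⬝ᵥ S *ᵥ v := add_nonneg hqT hqS
    rw [h_sum] at hge
    -- 0 ≤ t * q with t < 0 and q ≥ 0 forces q = 0
    set q := star v ⬝ᵥ T *ᵥ v + star v ⬝ᵥ S *ᵥ v with hqdef
    rw [Complex.nonneg_iff] at hsum0 hge
    have him : q.im = 0 := hsum0.2.symm
    have hre : 0 ≤ ((t : ℂ) * q).re := hge.1
    rw [Complex.mul_re, Complex.ofReal_re, Complex.ofReal_im, him] at hre
    simp only [mul_zero, zero_mul, sub_zero] at hre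
    have : q.re ≤ 0 := nonpos_of_mul_nonneg_right (by linarith) hneg
    have : q.re = 0 := le_antisymm this hsum0.1
    exact Complex.ext (by simpa using this) (by simpa using him)
  have hT0 : T *ᵥ v = 0 := by
    have h1 : star v ⬝ᵥ T *ᵥ v = 0 := by
      have := add_eq_zero_iff_eq_neg.mp hq
      refine le_antisymm ?_ hqT
      rw [this]
      simpa only [neg_nonpos] using hqS
    exact (hTp.dotProduct_mulVec_zero_iff v).mp h1
  have hS0 : S *ᵥ v = 0 := by
    have h1 : star v ⬝ᵥ S *ᵥ v = 0 := by
      have := add_eq_zero_iff_eq_neg.mp (by rwa [add_comm] at hq)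
      refine le_antisymm ?_ hqS
      rw [this]
      simpa only [neg_nonpos] using hqT
    exact (hSp.dotProduct_mulVec_zero_iff v).mp h1
  have : (t : ℝ) • v = 0 := by rw [← hv, sub_mulVec, hT0, hS0, sub_zero]
  exact hv0 ((smul_eq_zero.mp this).resolve_left (ne_of_lt hneg))

/-- Square-root perturbation under a projection sandwich: if `P` is an
orthogonal projection, `A` is positive semidefinite and
`(1 − c)·P ≼ A ≼ P` with `c ∈ [0,1]`, then `0 ≼ P − √A ≼ c·P`. -/
theorem sqrt_perturbation_under_projection_sandwich
    (d : ℕ) (P A : Matrix (Fin d) (Fin d) ℂ)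
    (hP : P.IsHermitian) (hP2 : P * P = P)
    (hA : A.PosSemidef) (c : ℝ) (hc0 : 0 ≤ c) (hc1 : c ≤ 1)
    (hlow : (A - ((1 - c : ℝ) : ℂ) • P).PosSemidef)
    (hup : (P - A).PosSemidef) :
    (P - hA.sqrt).PosSemidef ∧ ((c : ℂ) • P - (P - hA.sqrt)).PosSemidef := by
  have hPpsd : P.PosSemidef := by
    have := Matrix.posSemidef_conjTranspose_mul_self P
    rwa [hP, hP2] at this
  have hsqrtP : P = hPpsd.sqrt := hPpsd.eq_sqrt_of_sq_eq hPpsd (by rw [sq, hP2])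
  have h1 : (P - hA.sqrt).PosSemidef := by
    have := sqrt_mono hA hPpsd hup
    rwa [← hsqrtP] at this
  refine ⟨h1, ?_⟩
  -- lower bound part
  have h1c : (0:ℝ) ≤ 1 - c := by linarith
  have hBpsd : (((1 - c : ℝ) : ℂ) • P).PosSemidef := psd_real_smul hPpsd h1c
  have hs : (0:ℝ) ≤ Real.sqrt (1 - c) := Real.sqrt_nonneg _
  have hQ : (((Real.sqrt (1 - c) : ℝ) : ℂ) • P).PosSemidef := psd_real_smul hPpsd hs
  have hQsq : (((Real.sqrt (1 - c) : ℝ) : ℂ) • P) ^ 2 = ((1 - c : ℝ) : ℂ) • P := by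
    rw [sq, Matrix.smul_mul, Matrix.mul_smul, hP2, smul_smul, ← Complex.ofReal_mul,
      Real.mul_self_sqrt h1c]
  have hsqrtB : (((Real.sqrt (1 - c) : ℝ) : ℂ) • P) = hBpsd.sqrt :=
    hQ.eq_sqrt_of_sq_eq hBpsd hQsq
  have h2 : (hA.sqrt - ((Real.sqrt (1 - c) : ℝ) : ℂ) • P).PosSemidef := by
    have := sqrt_mono hBpsd hA hlow
    rwa [← hsqrtB] at this
  -- √(1-c) ≥ 1 - c
  have hge : (1 - c) ≤ Real.sqrt (1 - c) := by
    nlinarith [Real.sq_sqrt h1c, Real.sqrt_nonneg (1 - c), sq_nonneg (Real.sqrt (1-c) - 1)]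
  have h3 : (((Real.sqrt (1 - c) - (1 - c) : ℝ) : ℂ) • P).PosSemidef :=
    psd_real_smul hPpsd (by linarith)
  have key : (c : ℂ) • P - (P - hA.sqrt)
      = (hA.sqrt - ((Real.sqrt (1 - c) : ℝ) : ℂ) • P)
        + ((Real.sqrt (1 - c) - (1 - c) : ℝ) : ℂ) • P := by
    push_cast
    module
  rw [key]
  exact h2.add h3
end
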